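/- For subgroups L ≤ G × H, M ≤ H × K, N ≤ K × I of products of finite groups, there is a group isomorphism (k₂(L) ∩ k₁(M*N)) / (k₂(L) ∩ k₁(M)) ≅ (k₂(L*M) ∩ k₁(N)) / (k₂(M) ∩ k₁(N)); in particular |k₂(L) ∩ k₁(M)| · |k₂(L*M) ∩ k₁(N)| = |k₂(L) ∩ k₁(M*N)| · |k₂(M) ∩ k₁(N)|. -/

import Mathlib

open Subgroup

section Defs
variable {G H K : Type*} [Group G] [Group H] [Group K]

/-- Image of `L ≤ G × H` under the first projection. -/
def p1 (L : Subgroup (G × H)) : Subgroup G := L.map (MonoidHom.fst G H)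

/-- Image of `L ≤ G × H` under the second projection. -/
def p2 (L : Subgroup (G × H)) : Subgroup H := L.map (MonoidHom.snd G H)

/-- `k₁(L) = {g | (g,1) ∈ L}`. -/
def k1 (L : Subgroup (G × H)) : Subgroup G := L.comap (MonoidHom.inl G H)

/-- `k₂(L) = {h | (1,h) ∈ L}`. -/
def k2 (L : Subgroup (G × H)) : Subgroup H := L.comap (MonoidHom.inr G H)

/-- The star (composition of relations) product of subgroups. -/
def starSub (L : Subgroup (G × H)) (M : Subgroup (H × K)) : Subgroup (G × K) where
  carrier := {p | ∃ h : H, (p.1, h) ∈ L ∧ (h, p.2) ∈ M}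
  one_mem' := ⟨1, L.one_mem, M.one_mem⟩
  mul_mem' := by
    rintro ⟨g, k⟩ ⟨g', k'⟩ ⟨h, hL, hM⟩ ⟨h', hL', hM'⟩
    exact ⟨h * h', L.mul_mem hL hL', M.mul_mem hM hM'⟩
  inv_mem' := by
    rintro ⟨g, k⟩ ⟨h, hL, hM⟩
    exact ⟨h⁻¹, L.inv_mem hL, M.inv_mem hM⟩

/-- The opposite subgroup `L° ≤ H × G` of `L ≤ G × H`. -/
def oppSub (L : Subgroup (G × H)) : Subgroup (H × G) :=
  L.comap (MulEquiv.prodComm : H × G ≃* G × H).toMonoidHom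

end Defs

/-- Group isomorphism `(k₂(L) ∩ k₁(M*N))/(k₂(L) ∩ k₁(M)) ≅ (k₂(L*M) ∩ k₁(N))/(k₂(M) ∩ k₁(N))`,
and the resulting cardinality identity. -/
theorem stmt4 {G H K I : Type*} [Group G] [Group H] [Group K] [Group I]
    [Finite G] [Finite H] [Finite K] [Finite I]
    (L : Subgroup (G × H)) (M : Subgroup (H × K)) (N : Subgroup (K × I))
    [((k2 L ⊓ k1 M).subgroupOf (k2 L ⊓ k1 (starSub M N))).Normal]
    [((k2 M ⊓ k1 N).subgroupOf (k2 (starSub L M) ⊓ k1 N)).Normal] :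
    Nonempty
      ((↥(k2 L ⊓ k1 (starSub M N)) ⧸ (k2 L ⊓ k1 M).subgroupOf (k2 L ⊓ k1 (starSub M N))) ≃*
       (↥(k2 (starSub L M) ⊓ k1 N) ⧸ (k2 M ⊓ k1 N).subgroupOf (k2 (starSub L M) ⊓ k1 N))) ∧
    Nat.card (k2 L ⊓ k1 M : Subgroup H) * Nat.card (k2 (starSub L M) ⊓ k1 N : Subgroup K) =
      Nat.card (k2 L ⊓ k1 (starSub M N) : Subgroup H) * Nat.card (k2 M ⊓ k1 N : Subgroup K) := by
  classical
  set A := k2 L ⊓ k1 (starSub M N) with hA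
  set C := k2 (starSub L M) ⊓ k1 N with hC
  set B := (k2 L ⊓ k1 M).subgroupOf A with hB
  set D := (k2 M ⊓ k1 N).subgroupOf C with hD
  have hex : ∀ a : ↥A, ∃ c : ↥C, (((a : H)), ((c : K))) ∈ M := by
    rintro ⟨a, ha1, ha2⟩
    obtain ⟨k, hM, hN⟩ := ha2
    exact ⟨⟨k, ⟨a, ha1, hM⟩, hN⟩, hM⟩
  let φ : ↥A → ↥C ⧸ D := fun a => QuotientGroup.mk (Classical.choose (hex a))
  have hφ : ∀ (a : ↥A) (c : ↥C), (((a : H)), ((c : K))) ∈ M → φ a = QuotientGroup.mk c := by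
    intro a c hc
    have hc' := Classical.choose_spec (hex a)
    set c0 := Classical.choose (hex a)
    refine (QuotientGroup.eq).2 ?_
    rw [hD, Subgroup.mem_subgroupOf]
    constructor
    · have : ((a : H), (c0 : K))⁻¹ * ((a : H), (c : K)) ∈ M := M.mul_mem (M.inv_mem hc') hc
      simpa [k2] using this
    · exact (k1 N).mul_mem ((k1 N).inv_mem c0.2.2) c.2.2
  let f : ↥A →* ↥C ⧸ D :=
    { toFun := φ
      map_one' := by
        have := hφ 1 1 (by exact M.one_mem)
        simpa using this
      map_mul' := by
        intro a b
        have ha := Classical.choose_spec (hex a)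
        have hb := Classical.choose_spec (hex b)
        have : (((a * b : ↥A) : H), ((Classical.choose (hex a) * Classical.choose (hex b) : ↥C) : K)) ∈ M := by
          have := M.mul_mem ha hb
          simpa using this
        show φ (a * b) = φ a * φ b
        rw [hφ _ _ this]
        rfl }
  have hsurj : Function.Surjective f := by
    intro q
    induction q using QuotientGroup.induction_on with
    | H c =>
      obtain ⟨hc1, hc2⟩ := c.2
      obtain ⟨h, hL, hM⟩ := hc1
      have hA' : h ∈ A := ⟨hL, ⟨(c : K), hM, hc2⟩⟩
      exact ⟨⟨h, hA'⟩, hφ ⟨h, hA'⟩ c hM⟩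
  have hker : f.ker = B := by
    ext x
    constructor
    · intro hx
      have hc := Classical.choose_spec (hex x)
      set c0 := Classical.choose (hex x)
      have : φ x = 1 := hx
      have h1 : c0 ∈ D := by
        have := (QuotientGroup.eq_one_iff (c0 : ↥C)).1 this.symm.symm
        exact this
      rw [hD, Subgroup.mem_subgroupOf] at h1
      obtain ⟨h1a, _⟩ := h1
      rw [hB, Subgroup.mem_subgroupOf]
      refine ⟨x.2.1, ?_⟩
      have : ((x : H), (c0 : K)) * ((1 : H), (c0 : K))⁻¹ ∈ M := M.mul_mem hc (M.inv_mem h1a)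
      simpa [k1] using this
    · intro hx
      rw [hB, Subgroup.mem_subgroupOf] at hx
      have h1 : (((x : H)), ((1 : ↥C) : K)) ∈ M := hx.2
      have := hφ x 1 h1
      show φ x = 1
      simpa using this
  have e : (↥A ⧸ B) ≃* (↥C ⧸ D) :=
    (QuotientGroup.quotientMulEquivOfEq hker.symm).trans
      (QuotientGroup.quotientKerEquivOfSurjective f hsurj)
  refine ⟨⟨e⟩, ?_⟩
  have hBle : k2 L ⊓ k1 M ≤ A := by
    rintro x ⟨h1, h2⟩
    exact ⟨h1, ⟨1, h2, N.one_mem⟩⟩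
  have hDle : k2 M ⊓ k1 N ≤ C := by
    rintro x ⟨h1, h2⟩
    exact ⟨⟨1, L.one_mem, h1⟩, h2⟩
  have cB : Nat.card (k2 L ⊓ k1 M : Subgroup H) = Nat.card B :=
    (Nat.card_congr (Subgroup.subgroupOfEquivOfLe hBle).toEquiv).symm
  have cD : Nat.card (k2 M ⊓ k1 N : Subgroup K) = Nat.card D :=
    (Nat.card_congr (Subgroup.subgroupOfEquivOfLe hDle).toEquiv).symm
  have cqA : Nat.card ↥A = Nat.card (↥A ⧸ B) * Nat.card B :=
    Subgroup.card_eq_card_quotient_mul_card_subgroup B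
  have cqC : Nat.card ↥C = Nat.card (↥C ⧸ D) * Nat.card D :=
    Subgroup.card_eq_card_quotient_mul_card_subgroup D
  have cq : Nat.card (↥A ⧸ B) = Nat.card (↥C ⧸ D) := Nat.card_congr e.toEquiv
  rw [cB, cD, cqA, cqC, cq]
  ring
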